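/- Let (R, ·, 𝔢) be a partial A-module algebra over a regular multiplier Hopf algebra A. Then the product of the smash product algebra R # A is left nondegenerate: if (x # a)(y # b) = 0 for all x # a ∈ R # A, then y # b = 0. -/

import Mathlib

/- ## Preliminaries: multiplier algebras and (regular) multiplier Hopf algebras -/

open scoped TensorProduct
open TensorProduct LinearMap
set_option linter.unusedSectionVars false

noncomputable section

variable (k : Type*) [Field k]

section MultiplierAlgebra

variable (A : Type*) [NonUnitalRing A] [Module k A] [SMulCommClass k A A] [IsScalarTower k A A]

/-- The product of an algebra is *nondegenerate*. -/
def NondegProd : Prop :=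
  (∀ a : A, (∀ b : A, a * b = 0) → a = 0) ∧ ∀ b : A, (∀ a : A, a * b = 0) → b = 0

/-- A multiplier of `A`: a pair `(U, V)` of linear maps with `U (a*b) = U a * b`,
`V (a*b) = a * V b` and `V a * b = a * U b`. -/
@[ext] structure Multiplier where
  U : A →ₗ[k] A
  V : A →ₗ[k] A
  U_mul : ∀ a b : A, U (a * b) = U a * b
  V_mul : ∀ a b : A, V (a * b) = a * V b
  compat : ∀ a b : A, V a * b = a * U b

namespace Multiplier

variable {k A}

instance : Zero (Multiplier k A) := ⟨⟨0, 0, by simp, by simp, by simp⟩⟩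
instance : Add (Multiplier k A) :=
  ⟨fun m n => ⟨m.U + n.U, m.V + n.V,
    by simp [m.U_mul, n.U_mul, add_mul],
    by simp [m.V_mul, n.V_mul, mul_add],
    by simp [add_mul, mul_add, m.compat, n.compat]⟩⟩
instance : Neg (Multiplier k A) :=
  ⟨fun m => ⟨-m.U, -m.V, by simp [m.U_mul], by simp [m.V_mul],
    by simp [m.compat]⟩⟩
instance : SMul k (Multiplier k A) :=
  ⟨fun c m => ⟨c • m.U, c • m.V,
    by simp [m.U_mul, smul_mul_assoc],
    by simp [m.V_mul, mul_smul_comm],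
    by simp [smul_mul_assoc, mul_smul_comm, m.compat]⟩⟩

@[simp] lemma zero_U : (0 : Multiplier k A).U = 0 := rfl
@[simp] lemma zero_V : (0 : Multiplier k A).V = 0 := rfl
@[simp] lemma add_U (m n : Multiplier k A) : (m + n).U = m.U + n.U := rfl
@[simp] lemma add_V (m n : Multiplier k A) : (m + n).V = m.V + n.V := rfl
@[simp] lemma neg_U (m : Multiplier k A) : (-m).U = -m.U := rfl
@[simp] lemma neg_V (m : Multiplier k A) : (-m).V = -m.V := rfl
@[simp] lemma smul_U (c : k) (m : Multiplier k A) : (c • m).U = c • m.U := rfl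
@[simp] lemma smul_V (c : k) (m : Multiplier k A) : (c • m).V = c • m.V := rfl

instance : AddCommGroup (Multiplier k A) where
  add_assoc a b c := by ext x <;> simp [add_assoc]
  zero_add a := by ext x <;> simp
  add_zero a := by ext x <;> simp
  add_comm a b := by ext x <;> simp [add_comm]
  neg_add_cancel a := by ext x <;> simp
  nsmul := nsmulRec
  zsmul := zsmulRec

instance : Module k (Multiplier k A) where
  one_smul m := by ext x <;> simp
  mul_smul c d m := by ext x <;> simp [mul_smul]
  smul_zero c := by ext x <;> simp
  smul_add c m n := by ext x <;> simp
  add_smul c d m := by ext x <;> simp [add_smul]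
  zero_smul m := by ext x <;> simp

instance : One (Multiplier k A) := ⟨⟨LinearMap.id, LinearMap.id, by simp, by simp, by simp⟩⟩
instance : Mul (Multiplier k A) :=
  ⟨fun m n => ⟨m.U ∘ₗ n.U, n.V ∘ₗ m.V,
    by simp [n.U_mul, m.U_mul],
    by simp [m.V_mul, n.V_mul],
    by intro a b; simp only [LinearMap.comp_apply]; rw [n.compat, m.compat]⟩⟩

@[simp] lemma one_U : (1 : Multiplier k A).U = LinearMap.id := rfl
@[simp] lemma one_V : (1 : Multiplier k A).V = LinearMap.id := rfl
@[simp] lemma mul_U (m n : Multiplier k A) : (m * n).U = m.U ∘ₗ n.U := rfl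
@[simp] lemma mul_V (m n : Multiplier k A) : (m * n).V = n.V ∘ₗ m.V := rfl

instance : Monoid (Multiplier k A) where
  mul_assoc a b c := by ext x <;> simp
  one_mul a := by ext x <;> simp
  mul_one a := by ext x <;> simp

/-- The canonical map `A → M(A)` given by left and right multiplication. -/
def incl (a : A) : Multiplier k A :=
  ⟨LinearMap.mulLeft k a, LinearMap.mulRight k a,
    fun b c => by simp [mul_assoc], fun b c => by simp [mul_assoc],
    fun b c => by simp [mul_assoc]⟩

@[simp] lemma incl_U (a b : A) : (incl (k := k) a).U b = a * b := rfl
@[simp] lemma incl_V (a b : A) : (incl (k := k) a).V b = b * a := rfl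

/-- The canonical map `A → M(A)` as a linear map. -/
def inclL : A →ₗ[k] Multiplier k A where
  toFun := incl
  map_add' a b := by ext x <;> simp [add_mul, mul_add]
  map_smul' c a := by ext x <;> simp [smul_mul_assoc, mul_smul_comm]

@[simp] lemma inclL_apply (a : A) : (inclL (k := k) a) = incl a := rfl

/-- The `U`-component, as a linear map. -/
def Ulm : Multiplier k A →ₗ[k] A →ₗ[k] A where
  toFun m := m.U
  map_add' _ _ := rfl
  map_smul' _ _ := rfl

/-- The `V`-component, as a linear map. -/
def Vlm : Multiplier k A →ₗ[k] A →ₗ[k] A where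
  toFun m := m.V
  map_add' _ _ := rfl
  map_smul' _ _ := rfl

end Multiplier

end MultiplierAlgebra

section Tensor

variable (R : Type*) [NonUnitalRing R] [Module k R] [SMulCommClass k R R] [IsScalarTower k R R]
variable (A : Type*) [NonUnitalRing A] [Module k A] [SMulCommClass k A A] [IsScalarTower k A A]

/-- The multiplier `1 ⊗ a` of `R ⊗ A`. -/
def oneT (a : A) : Multiplier k (R ⊗[k] A) where
  U := lTensor R (LinearMap.mulLeft k a)
  V := lTensor R (LinearMap.mulRight k a)
  U_mul u v := by
    induction u with
    | zero => simp
    | add u₁ u₂ h₁ h₂ => simp [add_mul, h₁, h₂]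
    | tmul x b =>
      induction v with
      | zero => simp
      | add v₁ v₂ h₁ h₂ => simp [mul_add, h₁, h₂]
      | tmul y c => simp [Algebra.TensorProduct.tmul_mul_tmul, mul_assoc]
  V_mul u v := by
    induction u with
    | zero => simp
    | add u₁ u₂ h₁ h₂ => simp [add_mul, h₁, h₂]
    | tmul x b =>
      induction v with
      | zero => simp
      | add v₁ v₂ h₁ h₂ => simp [mul_add, h₁, h₂]
      | tmul y c => simp [Algebra.TensorProduct.tmul_mul_tmul, mul_assoc]
  compat u v := by
    induction u with
    | zero => simp
    | add u₁ u₂ h₁ h₂ => simp [add_mul, h₁, h₂]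
    | tmul x b =>
      induction v with
      | zero => simp
      | add v₁ v₂ h₁ h₂ => simp only [map_add, mul_add, h₁, h₂]
      | tmul y c => simp [Algebra.TensorProduct.tmul_mul_tmul, mul_assoc]

/-- The multiplier `x ⊗ 1` of `R ⊗ A`. -/
def tOne (x : R) : Multiplier k (R ⊗[k] A) where
  U := rTensor A (LinearMap.mulLeft k x)
  V := rTensor A (LinearMap.mulRight k x)
  U_mul u v := by
    induction u with
    | zero => simp
    | add u₁ u₂ h₁ h₂ => simp [add_mul, h₁, h₂]
    | tmul y b =>
      induction v with
      | zero => simp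
      | add v₁ v₂ h₁ h₂ => simp [mul_add, h₁, h₂]
      | tmul z c => simp [Algebra.TensorProduct.tmul_mul_tmul, mul_assoc]
  V_mul u v := by
    induction u with
    | zero => simp
    | add u₁ u₂ h₁ h₂ => simp [add_mul, h₁, h₂]
    | tmul y b =>
      induction v with
      | zero => simp
      | add v₁ v₂ h₁ h₂ => simp [mul_add, h₁, h₂]
      | tmul z c => simp [Algebra.TensorProduct.tmul_mul_tmul, mul_assoc]
  compat u v := by
    induction u with
    | zero => simp
    | add u₁ u₂ h₁ h₂ => simp [add_mul, h₁, h₂]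
    | tmul y b =>
      induction v with
      | zero => simp
      | add v₁ v₂ h₁ h₂ => simp only [map_add, mul_add, h₁, h₂]
      | tmul z c => simp [Algebra.TensorProduct.tmul_mul_tmul, mul_assoc]

/-- The multiplier `m ⊗ a` of `R ⊗ A`, for `m ∈ M(R)`, `a ∈ A`. -/
def mtensor (m : Multiplier k R) (a : A) : Multiplier k (R ⊗[k] A) where
  U := map m.U (LinearMap.mulLeft k a)
  V := map m.V (LinearMap.mulRight k a)
  U_mul u v := by
    induction u with
    | zero => simp
    | add u₁ u₂ h₁ h₂ => simp [add_mul, h₁, h₂]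
    | tmul y b =>
      induction v with
      | zero => simp
      | add v₁ v₂ h₁ h₂ => simp [mul_add, h₁, h₂]
      | tmul z c => simp [Algebra.TensorProduct.tmul_mul_tmul, mul_assoc, m.U_mul]
  V_mul u v := by
    induction u with
    | zero => simp
    | add u₁ u₂ h₁ h₂ => simp [add_mul, h₁, h₂]
    | tmul y b =>
      induction v with
      | zero => simp
      | add v₁ v₂ h₁ h₂ => simp [mul_add, h₁, h₂]
      | tmul z c => simp [Algebra.TensorProduct.tmul_mul_tmul, mul_assoc, m.V_mul]
  compat u v := by
    induction u with
    | zero => simp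
    | add u₁ u₂ h₁ h₂ => simp [add_mul, h₁, h₂]
    | tmul y b =>
      induction v with
      | zero => simp
      | add v₁ v₂ h₁ h₂ => simp only [map_add, mul_add, h₁, h₂]
      | tmul z c => simp [Algebra.TensorProduct.tmul_mul_tmul, mul_assoc, m.compat]

/-- The multiplier `m ⊗ 1` of `R ⊗ A`, for `m ∈ M(R)`. -/
def mtensorOne (m : Multiplier k R) : Multiplier k (R ⊗[k] A) where
  U := map m.U LinearMap.id
  V := map m.V LinearMap.id
  U_mul u v := by
    induction u with
    | zero => simp
    | add u₁ u₂ h₁ h₂ => simp [add_mul, h₁, h₂]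
    | tmul y b =>
      induction v with
      | zero => simp
      | add v₁ v₂ h₁ h₂ => simp [mul_add, h₁, h₂]
      | tmul z c => simp [Algebra.TensorProduct.tmul_mul_tmul, m.U_mul]
  V_mul u v := by
    induction u with
    | zero => simp
    | add u₁ u₂ h₁ h₂ => simp [add_mul, h₁, h₂]
    | tmul y b =>
      induction v with
      | zero => simp
      | add v₁ v₂ h₁ h₂ => simp [mul_add, h₁, h₂]
      | tmul z c => simp [Algebra.TensorProduct.tmul_mul_tmul, m.V_mul]
  compat u v := by
    induction u with
    | zero => simp
    | add u₁ u₂ h₁ h₂ => simp [add_mul, h₁, h₂]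
    | tmul y b =>
      induction v with
      | zero => simp
      | add v₁ v₂ h₁ h₂ => simp only [map_add, mul_add, h₁, h₂]
      | tmul z c => simp [Algebra.TensorProduct.tmul_mul_tmul, m.compat]

/-- Apply a functional to the second tensor factor:  `x ⊗ a ↦ f a • x`. -/
def apT (f : A →ₗ[k] k) : R ⊗[k] A →ₗ[k] R :=
  (TensorProduct.rid k R).toLinearMap ∘ₗ lTensor R f

@[simp] lemma apT_tmul (f : A →ₗ[k] k) (x : R) (a : A) :
    apT k R A f (x ⊗ₜ a) = f a • x := rfl

/-- Sum of pure tensors attached to a list of pairs. -/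
def psum {M N : Type*} [AddCommGroup M] [Module k M] [AddCommGroup N] [Module k N]
    (l : List (M × N)) : M ⊗[k] N :=
  (l.map fun p => p.1 ⊗ₜ[k] p.2).sum

end Tensor
section MHAdef

variable (A : Type*) [NonUnitalRing A] [Module k A] [SMulCommClass k A A] [IsScalarTower k A A]

/-- Apply a functional to the first tensor factor: `a ⊗ b ↦ f a • b`. -/
def apF (f : A →ₗ[k] k) : A ⊗[k] A →ₗ[k] A :=
  (TensorProduct.lid k A).toLinearMap ∘ₗ rTensor A f

@[simp] lemma apF_tmul (f : A →ₗ[k] k) (a b : A) : apF k A f (a ⊗ₜ b) = f a • b := rfl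

/-- A *regular multiplier Hopf algebra* structure on a nondegenerate algebra `A`:
a comultiplication `Δ : A → M(A ⊗ A)` such that the four Galois-type maps
`T1 : a ⊗ b ↦ Δ(a)(1 ⊗ b)`, `T2 : a ⊗ b ↦ (a ⊗ 1)Δ(b)`, `T3 : a ⊗ b ↦ Δ(a)(b ⊗ 1)`,
`T4 : a ⊗ b ↦ (1 ⊗ b)Δ(a)` are (well-defined and) bijective from `A ⊗ A` onto `A ⊗ A`,
together with its counit `ε` and (bijective) antipode `S`, subject to the usual axioms
(coassociativity and the counit and antipode laws, in their `T1`/`T2`-covered form). -/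
structure MHA where
  nondeg : NondegProd A
  comul : A →ₗ[k] Multiplier k (A ⊗[k] A)
  comul_mul : ∀ a b : A, comul (a * b) = comul a * comul b
  T1 : A ⊗[k] A ≃ₗ[k] A ⊗[k] A
  T2 : A ⊗[k] A ≃ₗ[k] A ⊗[k] A
  T3 : A ⊗[k] A ≃ₗ[k] A ⊗[k] A
  T4 : A ⊗[k] A ≃ₗ[k] A ⊗[k] A
  hT1 : ∀ a b : A, comul a * oneT k A A b = Multiplier.incl (T1 (a ⊗ₜ b))
  hT2 : ∀ a b : A, tOne k A A a * comul b = Multiplier.incl (T2 (a ⊗ₜ b))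
  hT3 : ∀ a b : A, comul a * tOne k A A b = Multiplier.incl (T3 (a ⊗ₜ b))
  hT4 : ∀ a b : A, oneT k A A b * comul a = Multiplier.incl (T4 (a ⊗ₜ b))
  coassoc : ∀ a b c : A,
    (TensorProduct.assoc k A A A)
        ((rTensor A (T2.toLinearMap ∘ₗ TensorProduct.mk k A A a)) (T1 (b ⊗ₜ c)))
      = (lTensor A (T1.toLinearMap ∘ₗ (TensorProduct.mk k A A).flip c)) (T2 (a ⊗ₜ b))
  counit : A →ₗ[k] k
  counit_mul : ∀ a b : A, counit (a * b) = counit a * counit b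
  hcounit1 : ∀ a b : A, apF k A counit (T1 (a ⊗ₜ b)) = a * b
  hcounit2 : ∀ a b : A, apT k A A counit (T2 (a ⊗ₜ b)) = a * b
  S : A ≃ₗ[k] A
  S_antimul : ∀ a b : A, S (a * b) = S b * S a
  hS1 : ∀ a b : A, LinearMap.mul' k A ((rTensor A S.toLinearMap) (T1 (a ⊗ₜ b))) = counit a • b
  hS2 : ∀ a b : A, LinearMap.mul' k A ((lTensor A S.toLinearMap) (T2 (a ⊗ₜ b))) = counit b • a

end MHAdef

section PComod

variable {k}
variable {A : Type*} [NonUnitalRing A] [Module k A] [SMulCommClass k A A] [IsScalarTower k A A]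
variable (H : MHA k A)
variable (R : Type*) [NonUnitalRing R] [Module k R] [SMulCommClass k R R] [IsScalarTower k R R]

/-- `(R, ρ, E)` is a *partial `A`-comodule algebra* (Definition 3.5).  The data
`rmap`/`lmap` records the elements `ρ(x)(1 ⊗ a)` and `(1 ⊗ a)ρ(x)` of `R ⊗ A`.
Condition `c3` is the coassociativity
`(ρ ⊗ ι)(ρ(x)) = (E ⊗ 1)(ι ⊗ Δ)(ρ(x))` in its fully covered form
`x⁽⁰⁾⁽⁰⁾ ⊗ x⁽⁰⁾⁽¹⁾a ⊗ x⁽¹⁾b = Σᵢ E(x⁽⁰⁾ ⊗ (x⁽¹⁾aᵢ)₍₁₎) ⊗ (x⁽¹⁾aᵢ)₍₂₎bᵢ`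
for any representation `Σᵢ aᵢ ⊗ bᵢ = T1⁻¹(a ⊗ b)`. -/
structure IsPComod (ρ : R →ₗ[k] Multiplier k (R ⊗[k] A)) (E : Multiplier k (R ⊗[k] A))
    (rmap : R →ₗ[k] A →ₗ[k] R ⊗[k] A) (lmap : A →ₗ[k] R →ₗ[k] R ⊗[k] A) : Prop where
  ρ_mul : ∀ x y : R, ρ (x * y) = ρ x * ρ y
  ρ_inj : Function.Injective ρ
  E_idem : E * E = E
  hrmap : ∀ (x : R) (a : A), ρ x * oneT k R A a = Multiplier.incl (rmap x a)
  hlmap : ∀ (a : A) (x : R), oneT k R A a * ρ x = Multiplier.incl (lmap a x)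
  c1l : ∀ a : A, ∃ l : List (Multiplier k R × A),
      oneT k R A a * E = (l.map fun p => mtensor k R A p.1 p.2).sum
  c1r : ∀ a : A, ∃ l : List (Multiplier k R × A),
      E * oneT k R A a = (l.map fun p => mtensor k R A p.1 p.2).sum
  c2l : ∀ (x : R) (a : A), ∃ u : R ⊗[k] A, rmap x a = E.U u
  c2r : ∀ (a : A) (x : R), ∃ u : R ⊗[k] A, lmap a x = E.V u
  c3 : ∀ (x : R) (a b : A) (l : List (A × A)), psum k l = H.T1.symm (a ⊗ₜ b) →
      rTensor A (rmap.flip a) (rmap x b)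
        = (l.map fun p => (rTensor A E.U) ((TensorProduct.assoc k R A A).symm
            ((lTensor R (H.T1.toLinearMap ∘ₗ (TensorProduct.mk k A A).flip p.2))
              (rmap x p.1)))).sum

/-- A *symmetric* partial `A`-comodule algebra (Definition 3.5 (iv)):  additionally
`(ρ ⊗ ι)(ρ(x)) = (ι ⊗ Δ)(ρ(x))(E ⊗ 1)`, in the fully covered form
`x⁽⁰⁾⁽⁰⁾ ⊗ ax⁽⁰⁾⁽¹⁾ ⊗ bx⁽¹⁾ = Σᵢ (x⁽⁰⁾ ⊗ (aᵢx⁽¹⁾)₍₁₎)E ⊗ bᵢ(aᵢx⁽¹⁾)₍₂₎` for any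
representation `Σᵢ aᵢ ⊗ bᵢ = T4⁻¹(a ⊗ b)`. -/
structure IsSymPComod (ρ : R →ₗ[k] Multiplier k (R ⊗[k] A)) (E : Multiplier k (R ⊗[k] A))
    (rmap : R →ₗ[k] A →ₗ[k] R ⊗[k] A) (lmap : A →ₗ[k] R →ₗ[k] R ⊗[k] A)
    extends IsPComod H R ρ E rmap lmap : Prop where
  c4 : ∀ (x : R) (a b : A) (l : List (A × A)), psum k l = H.T4.symm (a ⊗ₜ b) →
      rTensor A (lmap a) (lmap b x)
        = (l.map fun p => (rTensor A E.V) ((TensorProduct.assoc k R A A).symm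
            ((lTensor R (H.T4.toLinearMap ∘ₗ (TensorProduct.mk k A A).flip p.2))
              (lmap p.1 x)))).sum

/-- `R` is a (global) right `A`-comodule algebra via `ρ` (Definition 3.1), with
`rmap`/`lmap` recording `ρ(x)(1 ⊗ a) ∈ R ⊗ A` and `(1 ⊗ a)ρ(x) ∈ R ⊗ A`;
coassociativity `(ρ ⊗ ι)ρ = (ι ⊗ Δ)ρ` is stated in its fully covered form. -/
structure IsComod (ρ : R →ₗ[k] Multiplier k (R ⊗[k] A))
    (rmap : R →ₗ[k] A →ₗ[k] R ⊗[k] A) (lmap : A →ₗ[k] R →ₗ[k] R ⊗[k] A) : Prop where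
  ρ_mul : ∀ x y : R, ρ (x * y) = ρ x * ρ y
  ρ_inj : Function.Injective ρ
  hrmap : ∀ (x : R) (a : A), ρ x * oneT k R A a = Multiplier.incl (rmap x a)
  hlmap : ∀ (a : A) (x : R), oneT k R A a * ρ x = Multiplier.incl (lmap a x)
  coassoc : ∀ (x : R) (a b : A) (l : List (A × A)), psum k l = H.T1.symm (a ⊗ₜ b) →
      rTensor A (rmap.flip a) (rmap x b)
        = (l.map fun p => (TensorProduct.assoc k R A A).symm
            ((lTensor R (H.T1.toLinearMap ∘ₗ (TensorProduct.mk k A A).flip p.2))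
              (rmap x p.1))).sum

end PComod
section PMod

variable {k}
variable {A : Type*} [NonUnitalRing A] [Module k A] [SMulCommClass k A A] [IsScalarTower k A A]
variable (H : MHA k A)
variable (R : Type*) [NonUnitalRing R] [Module k R] [SMulCommClass k R R] [IsScalarTower k R R]

/-- `(R, ⬝, 𝔢)` is a *partial `A`-module algebra* (Definition 4.5).  Sweedler
expressions are stated for arbitrary list representations of the corresponding
covered elements; e.g. condition (i) reads
`a ⬝ (x (b ⬝ y)) = Σᵢ (pᵢ ⬝ x)(qᵢ ⬝ y)` whenever `Σᵢ pᵢ ⊗ qᵢ = Δ(a)(1 ⊗ b) = T1(a ⊗ b)`,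
and in (ii) one uses the covering `a₍₁₎ ⊗ S(a₍₂₎)b = (ι ⊗ S)((1 ⊗ S⁻¹(b))Δ(a))`. -/
structure IsPModAlg (act : A →ₗ[k] R →ₗ[k] R) (e : A →ₗ[k] Multiplier k R) : Prop where
  cond1 : ∀ (a b : A) (x y : R) (l : List (A × A)), psum k l = H.T1 (a ⊗ₜ b) →
      act a (x * act b y) = (l.map fun p => act p.1 x * act p.2 y).sum
  cond2a : ∀ (a b : A) (x : R) (l : List (A × A)), psum k l = H.T4 (a ⊗ₜ H.S.symm b) →
      (e a).U (act b x) = (l.map fun p => act p.1 (act (H.S p.2) x)).sum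
  cond2b : ∀ (a : A) (x : R),
      (e a).U x ∈ Submodule.span k {z : R | ∃ (b : A) (y : R), z = act b y}
  cond3 : ∀ (la : List A) (lx : List R), ∃ b : A,
      (∀ a ∈ la, a * b = a ∧ b * a = a) ∧ ∀ a ∈ la, ∀ x ∈ lx, act a x = act a (act b x)
  cond4 : ∀ x : R, (∀ a : A, act a x = 0) → x = 0

/-- A *symmetric* partial `A`-module algebra (Definition 4.5 (v)-(vii)).  In (vi),
one uses the covering `a₍₂₎ ⊗ S⁻¹(a₍₁₎)b = σ((S⁻¹ ⊗ ι)((S(b) ⊗ 1)Δ(a)))`. -/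
structure IsSymPModAlg (act : A →ₗ[k] R →ₗ[k] R) (e : A →ₗ[k] Multiplier k R)
    extends IsPModAlg H R act e : Prop where
  cond5 : ∀ (a b : A) (x y : R) (l : List (A × A)), psum k l = H.T3 (a ⊗ₜ b) →
      act a (act b x * y) = (l.map fun p => act p.1 x * act p.2 y).sum
  cond6 : ∀ (a b : A) (x : R) (l : List (A × A)), psum k l = H.T2 (H.S b ⊗ₜ a) →
      (e a).V (act b x) = (l.map fun p => act p.2 (act (H.S.symm p.1) x)).sum
  cond7 : ∀ (a : A) (x : R),
      (e a).V x ∈ Submodule.span k {z : R | ∃ (b : A) (y : R), z = act b y}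

/-- `R` is a (global, unitary) left `A`-module algebra (Definition 4.1). -/
structure IsModAlg (act : A →ₗ[k] R →ₗ[k] R) : Prop where
  assoc : ∀ (a b : A) (x : R), act a (act b x) = act (a * b) x
  unital : Submodule.span k {z : R | ∃ (a : A) (x : R), z = act a x} = ⊤
  mul_cond : ∀ (a b : A) (x y : R) (l : List (A × A)), psum k l = H.T1 (a ⊗ₜ b) →
      act a (x * act b y) = (l.map fun p => act p.1 x * act p.2 y).sum

end PMod

section Dual

variable {k}
variable {A : Type*} [NonUnitalRing A] [Module k A] [SMulCommClass k A A] [IsScalarTower k A A]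
variable (H : MHA k A)
variable (Ahat : Type*) [NonUnitalRing Ahat] [Module k Ahat] [SMulCommClass k Ahat Ahat]
  [IsScalarTower k Ahat Ahat] (Hh : MHA k Ahat)

/-- A realization of the *dual* `Â = {φ(– a) : a ∈ A}` of a regular multiplier Hopf
algebra `A` with left integral `φ` (as in (2.1)): a regular multiplier Hopf algebra
`Â` together with the linear bijections `hat : a ↦ φ(– a)` and `hat' : b ↦ φ(b –)`,
the evaluation pairing `ev`, the product rule `(ŵ û)(c) = (w ⊗ u)(Δ c)`, the
coproduct rules (2.5) and (2.6) read through `hat`, and the modular element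
`δ ∈ M(A)` of (5.1), `(φ ⊗ ι)Δ(a) = φ(a)δ`. -/
structure DualPair where
  φ : A →ₗ[k] k
  φ_ne : φ ≠ 0
  /-- `(ι ⊗ φ)((b ⊗ 1)Δ(a)) = φ(a) b` : left invariance of the integral. -/
  φ_int : ∀ a b : A, apT k A A φ (H.T2 (b ⊗ₜ a)) = φ a • b
  /-- `(ι ⊗ φ)(Δ(a)(b ⊗ 1)) = φ(a) b` : left invariance of the integral. -/
  φ_int' : ∀ a b : A, apT k A A φ (H.T3 (a ⊗ₜ b)) = φ a • b
  hat : A ≃ₗ[k] Ahat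
  hat' : A ≃ₗ[k] Ahat
  ev : Ahat →ₗ[k] A →ₗ[k] k
  ev_hat : ∀ a x : A, ev (hat a) x = φ (x * a)
  ev_hat' : ∀ b x : A, ev (hat' b) x = φ (b * x)
  /-- the product of `Â`: `(φ(– a) u)(c) = Σ φ(c₍₁₎ a) u(c₍₂₎)`. -/
  ev_mul : ∀ (a : A) (u : Ahat) (c : A),
      ev (hat a * u) c
        = (TensorProduct.lid k k) ((map φ (ev u)) (H.T3 (c ⊗ₜ a)))
  /-- identity (2.5): `Δ̂(φ(– a))(1 ⊗ φ(– b)) = φ(– S⁻¹(b₍₁₎)a) ⊗ φ(– b₍₂₎)`,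
  read through `hat⁻¹ ⊗ hat⁻¹` and covered on the right leg by `c`. -/
  hatT1 : ∀ a b c : A,
      (lTensor A (LinearMap.mulRight k c))
          ((map hat.symm.toLinearMap hat.symm.toLinearMap) (Hh.T1 (hat a ⊗ₜ hat b)))
        = rTensor A (LinearMap.mulRight k a ∘ₗ H.S.symm.toLinearMap) (H.T1 (b ⊗ₜ c))
  /-- identity (2.6): `(ι ⊗ Ŝ)((1 ⊗ Ŝ⁻¹(φ(– b)))Δ̂(φ(– a))) = φ(– b₍₁₎a) ⊗ φ(– b₍₂₎)`,
  read through `hat⁻¹ ⊗ hat⁻¹` and covered on the right leg by `c`. -/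
  hatT2 : ∀ a b c : A,
      (lTensor A (LinearMap.mulRight k c))
          ((map hat.symm.toLinearMap hat.symm.toLinearMap)
            ((lTensor Ahat Hh.S.toLinearMap) (Hh.T4 (hat a ⊗ₜ Hh.S.symm (hat b)))))
        = rTensor A (LinearMap.mulRight k a) (H.T1 (b ⊗ₜ c))
  /-- the modular element `δ`, with `(φ ⊗ ι)(Δ(a)(1 ⊗ b)) = φ(a) • (δ b)`. -/
  delta : Multiplier k A
  deltaInv : Multiplier k A
  delta_inv : delta * deltaInv = 1 ∧ deltaInv * delta = 1
  hdelta : ∀ a b : A, apF k A φ (H.T1 (a ⊗ₜ b)) = φ a • delta.U b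

end Dual
section Statements
variable {k}
variable {A : Type*} [NonUnitalRing A] [Module k A] [SMulCommClass k A A] [IsScalarTower k A A]
variable {R : Type*} [NonUnitalRing R] [Module k R] [SMulCommClass k R R] [IsScalarTower k R R]

set_option maxHeartbeats 1000000 in
/-- Left multiplication by `x # a` in the smash product algebra `R # A`
(Definition 5.1): `(x # a)(y # b) = x(a₍₁₎ · y) # a₍₂₎ b`. -/
def smashL (H : MHA k A) (act : A →ₗ[k] R →ₗ[k] R) (x : R) (a : A) :
    R ⊗[k] A →ₗ[k] R ⊗[k] A :=
  TensorProduct.lift <| LinearMap.mk₂ k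
    (fun y b => (map ((LinearMap.mulLeft k x) ∘ₗ (act.flip y)) (LinearMap.id (R := k) (M := A)))
      (H.T1 (a ⊗ₜ b)))
    (fun y₁ y₂ b => by
      have h : (LinearMap.mulLeft k x) ∘ₗ (act.flip (y₁ + y₂))
          = (LinearMap.mulLeft k x) ∘ₗ (act.flip y₁)
            + (LinearMap.mulLeft k x) ∘ₗ (act.flip y₂) := by
        rw [map_add, LinearMap.comp_add]
      rw [h, TensorProduct.map_add_left, LinearMap.add_apply])
    (fun c y b => by
      have h : (LinearMap.mulLeft k x) ∘ₗ (act.flip (c • y))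
          = c • ((LinearMap.mulLeft k x) ∘ₗ (act.flip y)) := by
        rw [map_smul, LinearMap.comp_smul]
      rw [h, TensorProduct.map_smul_left, LinearMap.smul_apply])
    (fun y b₁ b₂ => by rw [TensorProduct.tmul_add, map_add, map_add])
    (fun c y b => by rw [TensorProduct.tmul_smul, map_smul, map_smul])

section AuxSep

variable {M : Type*} {N : Type*} [AddCommGroup M] [Module k M] [AddCommGroup N] [Module k N]

/-- Cut the first tensor leg with a functional. -/
def cutL (f : M →ₗ[k] k) : M ⊗[k] N →ₗ[k] N :=
  (TensorProduct.lid k N).toLinearMap ∘ₗ rTensor N f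

/-- Cut the second tensor leg with a functional. -/
def cutR (g : N →ₗ[k] k) : M ⊗[k] N →ₗ[k] M :=
  (TensorProduct.rid k M).toLinearMap ∘ₗ lTensor M g

@[simp] lemma cutL_tmul (f : M →ₗ[k] k) (x : M) (y : N) : cutL f (x ⊗ₜ y) = f x • y := by
  simp [cutL]

@[simp] lemma cutR_tmul (g : N →ₗ[k] k) (x : M) (y : N) : cutR g (x ⊗ₜ y) = g y • x := by
  simp [cutR]

lemma sepL (Y : M ⊗[k] N) (h : ∀ f : M →ₗ[k] k, cutL f Y = 0) : Y = 0 := by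
  classical
  let b := Module.Basis.ofVectorSpace k M
  let c := Module.Basis.ofVectorSpace k N
  have key : ∀ (Z : M ⊗[k] N) (i) (j),
      (b.tensorProduct c).repr Z (i, j) = c.repr (cutL (b.coord i) Z) j := by
    intro Z i j
    induction Z using TensorProduct.induction_on with
    | zero => simp
    | tmul x y =>
        simp [Module.Basis.tensorProduct_repr_tmul_apply, Module.Basis.coord_apply, smul_eq_mul, mul_comm]
    | add u v hu hv => simp [map_add, hu, hv]
  have hY : (b.tensorProduct c).repr Y = 0 := by
    ext ⟨i, j⟩
    rw [Finsupp.zero_apply, key Y i j, h (b.coord i)]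
    simp
  exact (b.tensorProduct c).repr.map_eq_zero_iff.mp hY

lemma sepR (Y : M ⊗[k] N) (h : ∀ g : N →ₗ[k] k, cutR g Y = 0) : Y = 0 := by
  classical
  let b := Module.Basis.ofVectorSpace k M
  let c := Module.Basis.ofVectorSpace k N
  have key : ∀ (Z : M ⊗[k] N) (i) (j),
      (b.tensorProduct c).repr Z (i, j) = b.repr (cutR (c.coord j) Z) i := by
    intro Z i j
    induction Z using TensorProduct.induction_on with
    | zero => simp
    | tmul x y =>
        simp [Module.Basis.tensorProduct_repr_tmul_apply, Module.Basis.coord_apply, smul_eq_mul]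
    | add u v hu hv => simp [map_add, hu, hv]
  have hY : (b.tensorProduct c).repr Y = 0 := by
    ext ⟨i, j⟩
    rw [Finsupp.zero_apply, key Y i j, h (c.coord j)]
    simp
  exact (b.tensorProduct c).repr.map_eq_zero_iff.mp hY

lemma cutL_lTensor (f : M →ₗ[k] k) (hmap : N →ₗ[k] N) (v : M ⊗[k] N) :
    cutL f (lTensor M hmap v) = hmap (cutL f v) := by
  induction v using TensorProduct.induction_on with
  | zero => simp
  | tmul x y => simp
  | add u w hu hw => simp [hu, hw]

lemma cutR_rTensor (g : N →ₗ[k] k) (hmap : M →ₗ[k] M) (v : M ⊗[k] N) :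
    cutR g (rTensor N hmap v) = hmap (cutR g v) := by
  induction v using TensorProduct.induction_on with
  | zero => simp
  | tmul x y => simp
  | add u w hu hw => simp [hu, hw]

lemma cutL_map_id {M' : Type*} [AddCommGroup M'] [Module k M']
    (f : M' →ₗ[k] k) (hmap : M →ₗ[k] M') (v : M ⊗[k] N) :
    cutL f (map hmap LinearMap.id v) = cutL (f ∘ₗ hmap) v := by
  induction v using TensorProduct.induction_on with
  | zero => simp
  | tmul x y => simp
  | add u w hu hw => simp [hu, hw]

lemma map_comp_id_left {M' M'' : Type*} [AddCommGroup M'] [Module k M']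
    [AddCommGroup M''] [Module k M'']
    (f : M' →ₗ[k] M'') (hmap : M →ₗ[k] M') (v : M ⊗[k] N) :
    map (f ∘ₗ hmap) LinearMap.id v = rTensor N f (map hmap LinearMap.id v) := by
  induction v using TensorProduct.induction_on with
  | zero => simp
  | tmul x y => simp
  | add u w hu hw => simp only [map_add, hu, hw]

end AuxSep

section AuxAlg

lemma tmul_mul_eq_map (p q : A) (Z : A ⊗[k] A) :
    (p ⊗ₜ[k] q) * Z = map (LinearMap.mulLeft k p) (LinearMap.mulLeft k q) Z := by
  induction Z using TensorProduct.induction_on with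
  | zero => simp
  | tmul r s => simp [Algebra.TensorProduct.tmul_mul_tmul]
  | add u v hu hv => simp [mul_add, hu, hv]

lemma tensor_faithful (hA : NondegProd A) (Z : A ⊗[k] A)
    (hZ : ∀ u : A ⊗[k] A, u * Z = 0) : Z = 0 := by
  apply sepR
  intro g
  apply hA.2
  intro p
  have hY : rTensor A (LinearMap.mulLeft k p) Z = 0 := by
    apply sepL
    intro f
    apply hA.2
    intro q
    have h1 : lTensor A (LinearMap.mulLeft k q) (rTensor A (LinearMap.mulLeft k p) Z)
        = (p ⊗ₜ[k] q) * Z := by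
      rw [tmul_mul_eq_map]
      clear hZ
      induction Z using TensorProduct.induction_on with
      | zero => simp
      | tmul r s => simp
      | add u v hu hv => simp only [map_add]; rw [hu, hv]
    have h2 := cutL_lTensor f (LinearMap.mulLeft k q) (rTensor A (LinearMap.mulLeft k p) Z)
    rw [h1, hZ, map_zero] at h2
    simpa using h2.symm
  have h3 := cutR_rTensor g (LinearMap.mulLeft k p) Z
  rw [hY, map_zero] at h3
  simpa using h3.symm

lemma mul_lTensor_mulRight (b : A) (u X : A ⊗[k] A) :
    lTensor A (LinearMap.mulRight k b) (u * X) = u * lTensor A (LinearMap.mulRight k b) X := by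
  induction u using TensorProduct.induction_on with
  | zero => simp
  | add u1 u2 h1 h2 => simp [add_mul, h1, h2]
  | tmul p q =>
    induction X using TensorProduct.induction_on with
    | zero => simp
    | add X1 X2 g1 g2 => simp only [map_add, mul_add]; rw [g1, g2]
    | tmul r s => simp [Algebra.TensorProduct.tmul_mul_tmul, mul_assoc]

lemma lTensor_mulRight_mul (d : A) (u X : A ⊗[k] A) :
    (lTensor A (LinearMap.mulRight k d) u) * X = u * lTensor A (LinearMap.mulLeft k d) X := by
  induction u using TensorProduct.induction_on with
  | zero => simp
  | add u1 u2 h1 h2 => simp [add_mul, h1, h2]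
  | tmul p q =>
    induction X using TensorProduct.induction_on with
    | zero => simp
    | add X1 X2 g1 g2 => simp only [map_add, mul_add]; rw [g1, g2]
    | tmul r s => simp [Algebra.TensorProduct.tmul_mul_tmul, mul_assoc]

@[simp] lemma oneT_V (b : A) (u : A ⊗[k] A) :
    (oneT k A A b).V u = lTensor A (LinearMap.mulRight k b) u := rfl

/-- Key covering identity: `((1 ⊗ d)Δ(a))(1 ⊗ b) = (1 ⊗ d)(Δ(a)(1 ⊗ b))`. -/
lemma key_T4_T1 (H : MHA k A) (a d b : A) :
    lTensor A (LinearMap.mulRight k b) (H.T4 (a ⊗ₜ d))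
      = lTensor A (LinearMap.mulLeft k d) (H.T1 (a ⊗ₜ b)) := by
  have h1 : Multiplier.incl (k := k) (H.T4 (a ⊗ₜ d)) * oneT k A A b
      = oneT k A A d * Multiplier.incl (H.T1 (a ⊗ₜ b)) := by
    rw [← H.hT4 a d, ← H.hT1 a b, mul_assoc]
  have h2 : ∀ u : A ⊗[k] A,
      lTensor A (LinearMap.mulRight k b) (u * H.T4 (a ⊗ₜ d))
        = (lTensor A (LinearMap.mulRight k d) u) * H.T1 (a ⊗ₜ b) := by
    intro u
    have h3 := congrArg (fun m => Multiplier.V m u) h1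
    simpa [Multiplier.mul_V, Multiplier.incl_V] using h3
  have h4 : ∀ u : A ⊗[k] A,
      u * (lTensor A (LinearMap.mulRight k b) (H.T4 (a ⊗ₜ d))
        - lTensor A (LinearMap.mulLeft k d) (H.T1 (a ⊗ₜ b))) = 0 := by
    intro u
    rw [mul_sub, ← mul_lTensor_mulRight, h2, lTensor_mulRight_mul, sub_self]
  exact sub_eq_zero.mp (tensor_faithful H.nondeg _ h4)

lemma cutL_mul_right (μ : A →ₗ[k] k) (b : A) (v : A ⊗[k] A) :
    (cutL μ v) * b = cutL μ (lTensor A (LinearMap.mulRight k b) v) := by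
  induction v using TensorProduct.induction_on with
  | zero => simp
  | tmul p q => simp [smul_mul_assoc]
  | add u w hu hw => simp [add_mul, hu, hw]

lemma cutL_mul_left (μ : A →ₗ[k] k) (d : A) (v : A ⊗[k] A) :
    cutL μ (lTensor A (LinearMap.mulLeft k d) v) = d * cutL μ v := by
  induction v using TensorProduct.induction_on with
  | zero => simp
  | tmul p q => simp [mul_smul_comm]
  | add u w hu hw => simp [mul_add, hu, hw]

end AuxAlg

/-- **Proposition 5.2.**  If `(R, ·, 𝔢)` is a partial `A`-module algebra, then the
product of the smash product algebra `R # A` is left nondegenerate: if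
`(x # a) w = 0` for all `x # a ∈ R # A`, then `w = 0`. -/
theorem smash_product_left_nondegenerate
    (H : MHA k A) (hR : NondegProd R)
    (act : A →ₗ[k] R →ₗ[k] R) (e : A →ₗ[k] Multiplier k R)
    (h : IsPModAlg H R act e) :
    ∀ w : R ⊗[k] A, (∀ (x : R) (a : A), smashL H act x a w = 0) → w = 0 := by
  intro w hw
  obtain ⟨S, rfl⟩ := TensorProduct.exists_finset w
  -- a local unit `u` for the second legs of the chosen representation
  obtain ⟨u, hu, -⟩ := h.cond3 (S.toList.map Prod.snd) []
  have hu2 : ∀ p ∈ S, u * p.2 = p.2 := by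
    intro p hp
    exact (hu p.2 (List.mem_map.mpr ⟨p, Finset.mem_toList.mpr hp, rfl⟩)).2
  -- Step I : stripping the left factor `x` from the hypothesis
  have stepI : ∀ a : A,
      (∑ p ∈ S, map (act.flip p.1) LinearMap.id (H.T1 (a ⊗ₜ p.2))) = 0 := by
    intro a
    have hx : ∀ x : R, rTensor A (LinearMap.mulLeft k x)
        (∑ p ∈ S, map (act.flip p.1) LinearMap.id (H.T1 (a ⊗ₜ p.2))) = 0 := by
      intro x
      have hsm : smashL H act x a (∑ p ∈ S, p.1 ⊗ₜ[k] p.2)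
          = rTensor A (LinearMap.mulLeft k x)
              (∑ p ∈ S, map (act.flip p.1) LinearMap.id (H.T1 (a ⊗ₜ p.2))) := by
        rw [map_sum, map_sum]
        refine Finset.sum_congr rfl fun p _ => ?_
        rw [show smashL H act x a (p.1 ⊗ₜ[k] p.2)
            = map ((LinearMap.mulLeft k x) ∘ₗ (act.flip p.1)) LinearMap.id
                (H.T1 (a ⊗ₜ p.2)) from rfl]
        rw [map_comp_id_left]
      rw [← hsm]
      exact hw x a
    apply sepR
    intro g
    apply hR.2
    intro x
    have h3 := cutR_rTensor g (LinearMap.mulLeft k x)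
      (∑ p ∈ S, map (act.flip p.1) LinearMap.id (H.T1 (a ⊗ₜ p.2)))
    rw [hx, map_zero] at h3
    simpa [Finset.mul_sum] using h3.symm
  -- Step II : stripping further with functionals on `R`
  have star : ∀ (a : A) (f : R →ₗ[k] k),
      (∑ p ∈ S, cutL (f ∘ₗ (act.flip p.1)) (H.T1 (a ⊗ₜ p.2))) = 0 := by
    intro a f
    have h0 := congrArg (cutL f) (stepI a)
    rw [map_sum, map_zero] at h0
    rw [← h0]
    exact Finset.sum_congr rfl fun p _ => (cutL_map_id f (act.flip p.1) _).symm
  -- Step III : the associated bilinear form vanishes identically,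
  -- using the bijectivity of `T4` and the covering identity `key_T4_T1`.
  have omega : ∀ (f : R →ₗ[k] k) (v : A ⊗[k] A),
      (∑ p ∈ S, (cutL (f ∘ₗ (act.flip p.1)) v) * p.2) = 0 := by
    intro f v
    have hv : v = H.T4 (H.T4.symm v) := (H.T4.apply_symm_apply v).symm
    rw [hv]
    generalize H.T4.symm v = t
    induction t using TensorProduct.induction_on with
    | zero => simp
    | tmul a d =>
        have e1 : ∀ p ∈ S, (cutL (f ∘ₗ (act.flip p.1)) (H.T4 (a ⊗ₜ d))) * p.2
            = d * cutL (f ∘ₗ (act.flip p.1)) (H.T1 (a ⊗ₜ p.2)) := by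
          intro p _
          rw [cutL_mul_right, key_T4_T1 H a d p.2, cutL_mul_left]
        rw [Finset.sum_congr rfl e1, ← Finset.mul_sum, star a f, mul_zero]
    | add t1 t2 h1 h2 =>
        rw [map_add]
        have : ∀ p ∈ S, (cutL (f ∘ₗ (act.flip p.1)) (H.T4 t1 + H.T4 t2)) * p.2
            = (cutL (f ∘ₗ (act.flip p.1)) (H.T4 t1)) * p.2
              + (cutL (f ∘ₗ (act.flip p.1)) (H.T4 t2)) * p.2 := by
          intro p _
          rw [map_add, add_mul]
        rw [Finset.sum_congr rfl this, Finset.sum_add_distrib, h1, h2, add_zero]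
  -- Step IV/V : conclude
  have hact : ∀ c : A, rTensor A (act c) (∑ p ∈ S, p.1 ⊗ₜ[k] p.2) = 0 := by
    intro c
    apply sepL
    intro f
    have h5 := omega f (c ⊗ₜ[k] u)
    have h6 : ∀ p ∈ S, (cutL (f ∘ₗ (act.flip p.1)) (c ⊗ₜ[k] u)) * p.2
        = f (act c p.1) • p.2 := by
      intro p hp
      rw [cutL_tmul, smul_mul_assoc, hu2 p hp]
      simp
    rw [Finset.sum_congr rfl h6] at h5
    rw [map_sum, map_sum]
    simpa using h5
  apply sepR
  intro g
  apply h.cond4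
  intro c
  have h7 := cutR_rTensor g (act c) (∑ p ∈ S, p.1 ⊗ₜ[k] p.2)
  rw [hact, map_zero] at h7
  exact h7.symm

end Statements
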